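/- arXiv:0912.3282 — 3 statements merged into one kernel-verified Lean document; each statement's English description precedes it below -/
import Mathlib

section
/- Let c > 0, N₀ ≥ 0 be real numbers and let W₀ ≥ 6 be a natural number. Suppose A : ℕ → ℝ satisfies: A(n) ≥ 0 for all n; A(n) ≤ N₀ for all n ≤ W₀; and for every n > W₀ there exists a natural number k with (n:ℝ)/6 ≤ k and (k:ℝ) ≤ 5·n/6 such that A(n) ≤ (Real.sqrt (A(k) + A(n−k)) + c · Real.sqrt (6·n) · Real.log n)². Then there exists a constant d > 0 such that A(n) ≤ d · n · (Real.log n)⁴ for all natural numbers n ≥ 2. -/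
set_option maxHeartbeats 1000000 in
/-- Solution of the nonlinear divide-and-conquer recurrence for the embedding
area: if `A n ≤ N₀` below the threshold `W₀`, and for `n > W₀` there is a
balanced split `k` with `n/6 ≤ k ≤ 5n/6` such that
`A n ≤ (√(A k + A (n−k)) + c·√(6n)·log n)²`, then `A n = O(n·(log n)⁴)`. -/
theorem area_recurrence_bound (c N₀ : ℝ) (hc : 0 < c) (hN₀ : 0 ≤ N₀)
    (W₀ : ℕ) (hW₀ : 6 ≤ W₀) (A : ℕ → ℝ)
    (hnonneg : ∀ n : ℕ, 0 ≤ A n)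
    (hbase : ∀ n : ℕ, n ≤ W₀ → A n ≤ N₀)
    (hrec : ∀ n : ℕ, W₀ < n → ∃ k : ℕ, (n : ℝ) / 6 ≤ (k : ℝ) ∧
      (k : ℝ) ≤ 5 * (n : ℝ) / 6 ∧
      A n ≤ (Real.sqrt (A k + A (n - k)) +
        c * Real.sqrt (6 * (n : ℝ)) * Real.log n) ^ 2) :
    ∃ d : ℝ, 0 < d ∧ ∀ n : ℕ, 2 ≤ n → A n ≤ d * (n : ℝ) * (Real.log n) ^ 4 := by
  obtain ⟨ε, hεdef⟩ : ∃ ε : ℝ, ε = Real.log (6/5) := ⟨_, rfl⟩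
  have hε : (0:ℝ) < ε := hεdef ▸ Real.log_pos (by norm_num)
  have hlog2 : 0 < Real.log 2 := Real.log_pos one_lt_two
  obtain ⟨X, hXdef⟩ : ∃ X : ℝ, X = 2 * (Real.log 2)^4 := ⟨_, rfl⟩
  have hX : 0 < X := by rw [hXdef]; positivity
  obtain ⟨D, hDdef⟩ : ∃ D : ℝ, D = Real.sqrt 6 * c / ε + Real.sqrt (N₀ / X) := ⟨_, rfl⟩
  have hsq : 0 ≤ Real.sqrt (N₀ / X) := Real.sqrt_nonneg _
  have h6pos : (0:ℝ) < Real.sqrt 6 := Real.sqrt_pos.mpr (by norm_num)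
  have h1 : 0 < Real.sqrt 6 * c / ε := div_pos (mul_pos h6pos hc) hε
  have hD : 0 < D := by rw [hDdef]; linarith
  have hD2N : N₀ / X ≤ D^2 := by
    have h2 : Real.sqrt (N₀/X) ≤ D := by rw [hDdef]; linarith
    calc N₀/X = (Real.sqrt (N₀/X))^2 := (Real.sq_sqrt (by positivity)).symm
    _ ≤ D^2 := pow_le_pow_left₀ hsq h2 2
  have hDε : Real.sqrt 6 * c ≤ D * ε := by
    have h2 : Real.sqrt 6 * c / ε ≤ D := by rw [hDdef]; linarith
    calc Real.sqrt 6 * c = (Real.sqrt 6 * c / ε) * ε := by field_simp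
    _ ≤ D * ε := mul_le_mul_of_nonneg_right h2 hε.le
  refine ⟨D^2, by positivity, ?_⟩
  intro n
  induction n using Nat.strong_induction_on with
  | _ n ih =>
    intro hn2
    by_cases hnW : n ≤ W₀
    · -- base case
      have h1 : A n ≤ N₀ := hbase n hnW
      have hn2' : (2:ℝ) ≤ (n:ℝ) := by exact_mod_cast hn2
      have hl : Real.log 2 ≤ Real.log n := Real.log_le_log (by norm_num) hn2'
      have hpow : (Real.log 2)^4 ≤ (Real.log n)^4 := pow_le_pow_left₀ hlog2.le hl 4
      have h2 : X ≤ (n:ℝ) * (Real.log n)^4 := by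
        rw [hXdef]
        exact mul_le_mul hn2' hpow (by positivity) (by linarith)
      calc A n ≤ N₀ := h1
      _ = (N₀/X) * X := by field_simp
      _ ≤ D^2 * ((n:ℝ) * (Real.log n)^4) := mul_le_mul hD2N h2 hX.le (by positivity)
      _ = D^2 * n * (Real.log n)^4 := by ring
    · push_neg at hnW
      obtain ⟨k, hk1, hk2, hrecn⟩ := hrec n hnW
      set L : ℝ := Real.log n with hLdef
      have hn7 : 7 ≤ n := by omega
      have hn7' : (7:ℝ) ≤ (n:ℝ) := by exact_mod_cast hn7
      have hn0 : (0:ℝ) < (n:ℝ) := by linarith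
      have hk2n : 2 ≤ k := by
        have h1 : (1:ℝ) < (k:ℝ) := by linarith
        have : 1 < k := by exact_mod_cast h1
        omega
      have hkltn : k < n := by
        have : (k:ℝ) < (n:ℝ) := by linarith
        exact_mod_cast this
      have hkn : k ≤ n := hkltn.le
      have hcast : ((n - k : ℕ) : ℝ) = (n:ℝ) - (k:ℝ) := by
        push_cast [Nat.cast_sub hkn]; ring
      have hnk2 : 2 ≤ n - k := by
        have h1 : (1:ℝ) < ((n - k : ℕ) : ℝ) := by rw [hcast]; linarith
        have : 1 < n - k := by exact_mod_cast h1
        omega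
      have hnkltn : n - k < n := by omega
      -- log bounds
      have hεL : ε ≤ L := by
        rw [hεdef, hLdef]
        exact Real.log_le_log (by norm_num) (by linarith)
      have hL0 : 0 ≤ L := by linarith
      have h56 : Real.log (5*(n:ℝ)/6) = L - ε := by
        rw [hεdef, hLdef, show 5*(n:ℝ)/6 = (n:ℝ)*(5/6) by ring,
          Real.log_mul (by positivity) (by norm_num),
          show (5/6:ℝ) = (6/5)⁻¹ by norm_num, Real.log_inv]
        ring
      have hM0 : 0 ≤ L - ε := by linarith
      have hlogk : Real.log k ≤ L - ε := by
        rw [← h56]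
        exact Real.log_le_log (by positivity) hk2
      have hlognk : Real.log (n-k : ℕ) ≤ L - ε := by
        rw [← h56]
        exact Real.log_le_log (by rw [hcast]; linarith) (by rw [hcast]; linarith)
      have hlogk0 : 0 ≤ Real.log k :=
        Real.log_nonneg (by exact_mod_cast Nat.one_le_iff_ne_zero.mpr (by omega))
      have hlognk0 : 0 ≤ Real.log (n-k : ℕ) :=
        Real.log_nonneg (by exact_mod_cast Nat.one_le_iff_ne_zero.mpr (by omega))
      have hpk : (Real.log k)^4 ≤ (L - ε)^4 := pow_le_pow_left₀ hlogk0 hlogk 4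
      have hpnk : (Real.log (n-k:ℕ))^4 ≤ (L - ε)^4 := pow_le_pow_left₀ hlognk0 hlognk 4
      have hnkpos : (0:ℝ) ≤ (n:ℝ) - k := by linarith
      -- sum bound
      have e1 : A k ≤ D^2 * k * (L - ε)^4 := by
        calc A k ≤ D^2 * k * (Real.log k)^4 := ih k hkltn hk2n
        _ = (D^2 * k) * (Real.log k)^4 := by ring
        _ ≤ (D^2 * k) * (L - ε)^4 :=
          mul_le_mul_of_nonneg_left hpk (by positivity)
        _ = D^2 * k * (L - ε)^4 := by ring
      have e2 : A (n-k) ≤ D^2 * ((n:ℝ) - k) * (L - ε)^4 := by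
        calc A (n-k) ≤ D^2 * ((n-k:ℕ):ℝ) * (Real.log (n-k:ℕ))^4 := ih (n-k) hnkltn hnk2
        _ = (D^2 * ((n:ℝ) - k)) * (Real.log (n-k:ℕ))^4 := by rw [hcast]
        _ ≤ (D^2 * ((n:ℝ) - k)) * (L - ε)^4 :=
          mul_le_mul_of_nonneg_left hpnk (mul_nonneg (by positivity) hnkpos)
        _ = D^2 * ((n:ℝ) - k) * (L - ε)^4 := by ring
      have hsum : A k + A (n-k) ≤ D^2 * n * (L - ε)^4 := by
        have e3 : D^2 * (k:ℝ) * (L - ε)^4 + D^2 * ((n:ℝ) - k) * (L - ε)^4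
            = D^2 * n * (L - ε)^4 := by ring
        linarith
      -- sqrt bound
      have hS : Real.sqrt (A k + A (n-k)) ≤ D * Real.sqrt n * (L - ε)^2 := by
        have h := Real.sqrt_le_sqrt hsum
        have heq : Real.sqrt (D^2 * (n:ℝ) * (L - ε)^4)
            = D * Real.sqrt n * (L - ε)^2 := by
          rw [show D^2 * (n:ℝ) * (L - ε)^4 = (D * Real.sqrt n * (L - ε)^2)^2 by
            rw [mul_pow, mul_pow, Real.sq_sqrt hn0.le]; ring]
          exact Real.sqrt_sq (by positivity)
        linarith [heq ▸ h]
      have hT : c * Real.sqrt (6*(n:ℝ)) * L = Real.sqrt 6 * c * (Real.sqrt n * L) := by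
        rw [Real.sqrt_mul (by norm_num : (0:ℝ) ≤ 6)]; ring
      -- key scalar inequality
      have hkey : D * (L - ε)^2 + Real.sqrt 6 * c * L ≤ D * L^2 := by
        have h1 : Real.sqrt 6 * c * L ≤ D * ε * L := mul_le_mul_of_nonneg_right hDε hL0
        have h2 : D * ε * L ≤ D * (L^2 - (L - ε)^2) := by
          have h0 : 0 ≤ D * ε * (L - ε) :=
            mul_nonneg (mul_nonneg hD.le hε.le) (by linarith)
          have he : D*(L^2 - (L-ε)^2) - D*ε*L = D*ε*(L-ε) := by ring
          linarith
        linarith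
      have hST : Real.sqrt (A k + A (n-k)) + c * Real.sqrt (6*(n:ℝ)) * L
          ≤ D * Real.sqrt n * L^2 := by
        have hsn : 0 ≤ Real.sqrt (n:ℝ) := Real.sqrt_nonneg _
        have h3 := mul_le_mul_of_nonneg_left hkey hsn
        have e3 : Real.sqrt (n:ℝ) * (D*(L-ε)^2 + Real.sqrt 6*c*L)
            = D*Real.sqrt (n:ℝ)*(L-ε)^2 + Real.sqrt 6*c*(Real.sqrt (n:ℝ)*L) := by ring
        have e4 : Real.sqrt (n:ℝ) * (D*L^2) = D*Real.sqrt (n:ℝ)*L^2 := by ring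
        rw [hT]
        linarith
      have hbnn : 0 ≤ Real.sqrt (A k + A (n-k)) + c * Real.sqrt (6*(n:ℝ)) * L := by
        have h4 : 0 ≤ c * Real.sqrt (6*(n:ℝ)) * L :=
          mul_nonneg (mul_nonneg hc.le (Real.sqrt_nonneg _)) hL0
        linarith [Real.sqrt_nonneg (A k + A (n-k))]
      calc A n ≤ (Real.sqrt (A k + A (n-k)) + c * Real.sqrt (6*(n:ℝ)) * L)^2 := hrecn
      _ ≤ (D * Real.sqrt n * L^2)^2 := pow_le_pow_left₀ hbnn hST 2
      _ = D^2 * n * L^4 := by rw [mul_pow, mul_pow, Real.sq_sqrt hn0.le]; ring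
end

section
/- Let c > 0, N₀ ≥ 0 be real numbers and let W₀ ≥ 6 be a natural number. Suppose A, B : ℕ → ℝ satisfy: A(n) ≥ 0 and B(n) ≥ 0 for all n; A(n) ≤ N₀ and B(n) = Real.sqrt N₀ for all n ≤ W₀; for every n > W₀ and every natural number j with (n:ℝ)/6 ≤ j and (j:ℝ) ≤ 5·n/6 one has B(n) ≥ B(j) + Real.sqrt 6 · c · Real.log n; and for every n > W₀ there exists a natural number k with (n:ℝ)/6 ≤ k and (k:ℝ) ≤ 5·n/6 such that A(n) ≤ (Real.sqrt (A(k) + A(n−k)) + c · Real.sqrt (6·n) · Real.log n)². Then A(n) ≤ n · (B(n))² for every natural number n ≥ 1. -/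
/-- Key induction comparing the divide-and-conquer area recurrence `A` with the
auxiliary function `B`: under the stated base-case and recurrence hypotheses,
`A n ≤ n·(B n)²` for every `n ≥ 1`. -/
theorem area_le_n_mul_B_sq (c N₀ : ℝ) (hc : 0 < c) (hN₀ : 0 ≤ N₀)
    (W₀ : ℕ) (hW₀ : 6 ≤ W₀) (A B : ℕ → ℝ)
    (hAnonneg : ∀ n : ℕ, 0 ≤ A n) (hBnonneg : ∀ n : ℕ, 0 ≤ B n)
    (hAbase : ∀ n : ℕ, n ≤ W₀ → A n ≤ N₀)
    (hBbase : ∀ n : ℕ, n ≤ W₀ → B n = Real.sqrt N₀)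
    (hBrec : ∀ n : ℕ, W₀ < n → ∀ j : ℕ, (n : ℝ) / 6 ≤ (j : ℝ) →
      (j : ℝ) ≤ 5 * (n : ℝ) / 6 →
      B j + Real.sqrt 6 * c * Real.log n ≤ B n)
    (hArec : ∀ n : ℕ, W₀ < n → ∃ k : ℕ, (n : ℝ) / 6 ≤ (k : ℝ) ∧
      (k : ℝ) ≤ 5 * (n : ℝ) / 6 ∧
      A n ≤ (Real.sqrt (A k + A (n - k)) +
        c * Real.sqrt (6 * (n : ℝ)) * Real.log n) ^ 2) :
    ∀ n : ℕ, 1 ≤ n → A n ≤ (n : ℝ) * (B n) ^ 2 := by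
  intro n
  induction n using Nat.strong_induction_on with
  | _ n ih =>
    intro hn
    by_cases hw : n ≤ W₀
    · have h2 : (B n) ^ 2 = N₀ := by rw [hBbase n hw, Real.sq_sqrt hN₀]
      calc A n ≤ N₀ := hAbase n hw
        _ = 1 * (B n) ^ 2 := by rw [h2]; ring
        _ ≤ (n : ℝ) * (B n) ^ 2 := by
            apply mul_le_mul_of_nonneg_right _ (sq_nonneg _)
            exact_mod_cast hn
    · push_neg at hw
      obtain ⟨k, hk1, hk2, hk3⟩ := hArec n hw
      have hn7 : 7 ≤ n := by omega
      have hn7R : (7 : ℝ) ≤ (n : ℝ) := by exact_mod_cast hn7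
      have hkpos : 1 ≤ k := by
        rcases Nat.eq_zero_or_pos k with h | h
        · exfalso; rw [h] at hk1; simp at hk1; nlinarith
        · exact h
      have hkn : k < n := by
        have : (k : ℝ) < (n : ℝ) := by nlinarith
        exact_mod_cast this
      have hcast : ((n - k : ℕ) : ℝ) = (n : ℝ) - (k : ℝ) := by
        rw [Nat.cast_sub hkn.le]
      have hnk1 : (n : ℝ) / 6 ≤ ((n - k : ℕ) : ℝ) := by rw [hcast]; linarith
      have hnk2 : ((n - k : ℕ) : ℝ) ≤ 5 * (n : ℝ) / 6 := by rw [hcast]; linarith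
      have hnkpos : 1 ≤ n - k := by
        have : (1 : ℝ) ≤ ((n - k : ℕ) : ℝ) := by rw [hcast]; nlinarith
        exact_mod_cast this
      have hnklt : n - k < n := by omega
      have hAk := ih k hkn hkpos
      have hAnk := ih (n - k) hnklt hnkpos
      have hBk := hBrec n hw k hk1 hk2
      have hBnk := hBrec n hw (n - k) hnk1 hnk2
      set t := Real.sqrt 6 * c * Real.log n with ht_def
      have hlog : 0 ≤ Real.log n := Real.log_nonneg (by linarith)
      have ht : 0 ≤ t :=
        mul_nonneg (mul_nonneg (Real.sqrt_nonneg _) hc.le) hlog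
      set M := max (B k) (B (n - k)) with hM_def
      have hM0 : 0 ≤ M := le_max_of_le_left (hBnonneg k)
      have hMB : M + t ≤ B n := by
        rcases max_cases (B k) (B (n - k)) with ⟨hEq, _⟩ | ⟨hEq, _⟩ <;>
          rw [hM_def, hEq] <;> [exact hBk; exact hBnk]
      have hsum : A k + A (n - k) ≤ (n : ℝ) * M ^ 2 := by
        have h1 : (B k) ^ 2 ≤ M ^ 2 :=
          pow_le_pow_left₀ (hBnonneg k) (le_max_left _ _) 2
        have h2 : (B (n - k)) ^ 2 ≤ M ^ 2 :=
          pow_le_pow_left₀ (hBnonneg (n - k)) (le_max_right _ _) 2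
        have hk0 : (0 : ℝ) ≤ (k : ℝ) := Nat.cast_nonneg k
        have hnk0 : (0 : ℝ) ≤ ((n - k : ℕ) : ℝ) := Nat.cast_nonneg _
        nlinarith [mul_le_mul_of_nonneg_left h1 hk0,
          mul_le_mul_of_nonneg_left h2 hnk0]
      have hsqrt : Real.sqrt (A k + A (n - k)) ≤ Real.sqrt n * M := by
        have := Real.sqrt_le_sqrt hsum
        rwa [Real.sqrt_mul (Nat.cast_nonneg n), Real.sqrt_sq hM0] at this
      have hterm : c * Real.sqrt (6 * (n : ℝ)) * Real.log n = Real.sqrt n * t := by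
        rw [Real.sqrt_mul (by norm_num : (0 : ℝ) ≤ 6), ht_def]; ring
      have hterm0 : 0 ≤ c * Real.sqrt (6 * (n : ℝ)) * Real.log n :=
        mul_nonneg (mul_nonneg hc.le (Real.sqrt_nonneg _)) hlog
      calc A n ≤ (Real.sqrt (A k + A (n - k)) +
            c * Real.sqrt (6 * (n : ℝ)) * Real.log n) ^ 2 := hk3
        _ ≤ (Real.sqrt n * M + Real.sqrt n * t) ^ 2 := by
            apply pow_le_pow_left₀ (add_nonneg (Real.sqrt_nonneg _) hterm0)
            rw [hterm]; linarith
        _ = (Real.sqrt n) ^ 2 * (M + t) ^ 2 := by ring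
        _ ≤ (n : ℝ) * (B n) ^ 2 := by
            rw [Real.sq_sqrt (Nat.cast_nonneg n)]
            exact mul_le_mul_of_nonneg_left
              (pow_le_pow_left₀ (add_nonneg hM0 ht) hMB 2) (Nat.cast_nonneg n)
end

section
/- Let R = [a,b] × [c,d] ⊆ ℝ² be a rectangle with a < b and c < d, and let x₁, …, xₙ, y₁, …, yₙ be 2n pairwise distinct points in the interior of R. Let Ω be a compact convex subset of the interior of R that contains none of the points x₁, …, xₙ, y₁, …, yₙ. Then there exist n continuous injective maps τ₁, …, τₙ : [0,1] → ℝ² such that for each j: τⱼ(0) = xⱼ, τⱼ(1) = yⱼ, the image of τⱼ is contained in R and is disjoint from Ω; and the images of τ₁, …, τₙ are pairwise disjoint. -/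
open Set Metric Complex

private lemma strip_route (n : ℕ) (A B u v : Fin n → ℝ)
    (hinj : Function.Injective (Sum.elim A B : Fin n ⊕ Fin n → ℝ))
    (hlv : ∀ w : Fin n ⊕ Fin n, Sum.elim u v w ∈ Set.Ioo (0:ℝ) 1) :
    ∃ H : Fin n → ℝ → ℝ,
      (∀ j, Continuous (H j)) ∧ (∀ j, H j (A j) = u j) ∧ (∀ j, H j (B j) = v j) ∧
      (∀ j t, H j t ∈ Set.Ioo (0:ℝ) 1) ∧
      (∀ i j : Fin n, i ≠ j → ∀ t : ℝ, H i t ≠ H j t) := by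
  rcases Nat.eq_zero_or_pos n with hn | hn
  · subst hn
    exact ⟨fun j => j.elim0, fun j => j.elim0, fun j => j.elim0, fun j => j.elim0,
      fun j => j.elim0, fun i => i.elim0⟩
  have hW : Nonempty (Fin n ⊕ Fin n) := ⟨Sum.inl ⟨0, hn⟩⟩
  -- opaque strand data
  obtain ⟨θ, hθinl, hθinr⟩ : ∃ θ : Fin n ⊕ Fin n → ℝ,
      (∀ i, θ (Sum.inl i) = A i) ∧ (∀ i, θ (Sum.inr i) = B i) :=
    ⟨Sum.elim A B, fun _ => rfl, fun _ => rfl⟩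
  obtain ⟨lv, hlvinl, hlvinr⟩ : ∃ lv : Fin n ⊕ Fin n → ℝ,
      (∀ i, lv (Sum.inl i) = u i) ∧ (∀ i, lv (Sum.inr i) = v i) :=
    ⟨Sum.elim u v, fun _ => rfl, fun _ => rfl⟩
  have hθeq : θ = Sum.elim A B := by
    funext w; cases w with
    | inl i => rw [hθinl]; rfl
    | inr i => rw [hθinr]; rfl
  have hinjθ : Function.Injective θ := by rw [hθeq]; exact hinj
  have hlv01 : ∀ w, 0 < lv w ∧ lv w < 1 := by
    intro w
    have heq : lv w = Sum.elim u v w := by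
      cases w with
      | inl i => rw [hlvinl]; rfl
      | inr i => rw [hlvinr]; rfl
    rw [heq]
    exact ⟨(hlv w).1, (hlv w).2⟩
  -- the constant Λ
  obtain ⟨Λ, hΛpos, hΛle, hΛhalf⟩ :
      ∃ Λ : ℝ, 0 < Λ ∧ (∀ w, Λ ≤ lv w ∧ Λ ≤ 1 - lv w) ∧ Λ ≤ 1/2 := by
    refine ⟨Finset.univ.inf' Finset.univ_nonempty (fun w => min (lv w) (1 - lv w)), ?_, ?_, ?_⟩
    · rw [Finset.lt_inf'_iff]
      exact fun w _ => lt_min (hlv01 w).1 (by linarith [(hlv01 w).2])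
    · intro w
      have h := Finset.inf'_le (f := fun w => min (lv w) (1 - lv w)) (Finset.mem_univ w)
      exact ⟨le_trans h (min_le_left _ _), le_trans h (min_le_right _ _)⟩
    · obtain ⟨w⟩ := hW
      have h := Finset.inf'_le (f := fun w => min (lv w) (1 - lv w)) (Finset.mem_univ w)
      have h1 := min_le_left (lv w) (1 - lv w)
      have h2 := min_le_right (lv w) (1 - lv w)
      have := (hlv01 w).1; have := (hlv01 w).2
      by_cases hc : lv w ≤ 1 - lv w
      · rw [min_eq_left hc] at h; linarith
      · push_neg at hc; rw [min_eq_right hc.le] at h; linarith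
  -- the gap g
  obtain ⟨g, hgpos, hgle⟩ : ∃ g : ℝ, 0 < g ∧ ∀ w w', w ≠ w' → g ≤ |θ w - θ w'| := by
    have hne : (Finset.univ.offDiag : Finset ((Fin n ⊕ Fin n) × (Fin n ⊕ Fin n))).Nonempty := by
      refine ⟨(Sum.inl ⟨0, hn⟩, Sum.inr ⟨0, hn⟩),
        Finset.mem_offDiag.2 ⟨Finset.mem_univ _, Finset.mem_univ _, by simp⟩⟩
    refine ⟨Finset.inf' _ hne (fun p => |θ p.1 - θ p.2|), ?_, ?_⟩
    · rw [Finset.lt_inf'_iff]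
      rintro ⟨w, w'⟩ hp
      obtain ⟨-, -, hww'⟩ := Finset.mem_offDiag.1 hp
      exact abs_pos.2 (sub_ne_zero.2 (fun h => hww' (hinjθ h)))
    · intro w w' hww'
      have hmem : (w, w') ∈ (Finset.univ.offDiag :
          Finset ((Fin n ⊕ Fin n) × (Fin n ⊕ Fin n))) :=
        Finset.mem_offDiag.2 ⟨Finset.mem_univ _, Finset.mem_univ _, hww'⟩
      exact Finset.inf'_le (fun p => |θ p.1 - θ p.2|) hmem
  -- small constants
  obtain ⟨μ, γ, hμpos, hstep1, hstep2, hγhalf, hγΛ, hμ16⟩ :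
      ∃ μ γ : ℕ → ℝ, (∀ j, 0 < μ j) ∧ (∀ j, μ j + μ j + γ (j+1) ≤ γ j) ∧
        (∀ j, μ j + γ (j+1) ≤ Λ) ∧ (∀ j, Λ/2 ≤ γ j) ∧ (∀ j, γ j ≤ Λ) ∧
        (∀ j, μ j ≤ Λ/16) := by
    have h4pos : ∀ j : ℕ, (0:ℝ) < 4 ^ j := fun j => by positivity
    have h4ge : ∀ j : ℕ, (1:ℝ) ≤ 4 ^ j := fun j => one_le_pow₀ (by norm_num)
    refine ⟨fun j => Λ / (16 * 4 ^ j), fun j => Λ/2 + Λ/(4 * 4 ^ j), ?_, ?_, ?_, ?_, ?_, ?_⟩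
    · intro j; dsimp only; positivity
    · intro j
      dsimp only
      have hx := h4ge j
      have hx0 := h4pos j
      have e3 : (4:ℝ) ^ (j+1) = 4 * 4 ^ j := by rw [pow_succ]; ring
      have e4 : Λ/(4 * 4^j) = 4 * (Λ/(16 * 4^j)) := by field_simp; ring
      have e5 : Λ/(4 * 4^(j+1)) = Λ/(16 * 4^j) := by rw [e3]; ring_nf
      rw [e5]
      have e6 : (0:ℝ) < Λ/(16*4^j) := by positivity
      linarith
    · intro j
      dsimp only
      have hx := h4ge j
      have hx0 := h4pos j
      have e3 : (4:ℝ) ^ (j+1) = 4 * 4 ^ j := by rw [pow_succ]; ring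
      have e5 : Λ/(4 * 4^(j+1)) = Λ/(16 * 4^j) := by rw [e3]; ring_nf
      rw [e5]
      have e6 : Λ/(16 * 4^j) ≤ Λ/16 := by
        rw [div_le_div_iff₀ (by positivity) (by norm_num)]
        nlinarith
      linarith
    · intro j
      dsimp only
      have : (0:ℝ) < Λ/(4*4^j) := by positivity
      linarith
    · intro j
      dsimp only
      have hx := h4ge j
      have hx0 := h4pos j
      have e7 : Λ/(4 * 4^j) ≤ Λ/4 := by
        rw [div_le_div_iff₀ (by positivity) (by norm_num)]
        nlinarith
      linarith
    · intro j
      dsimp only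
      have hx := h4ge j
      have hx0 := h4pos j
      rw [div_le_div_iff₀ (by positivity) (by norm_num)]
      nlinarith
  have hγμ : ∀ j, μ j < γ j := fun j => by
    have h1 := hγhalf j
    have h2 := hμ16 j
    linarith
  have hγmono : ∀ j, γ (j+1) ≤ γ j := fun j => by
    have := hstep1 j
    have := hμpos j
    linarith
  -- extended pair data (opaque)
  obtain ⟨Aj, Bj, uj, vj, hd⟩ :
      ∃ Aj Bj uj vj : ℕ → ℝ,
        ∀ j : Fin n, Aj j.val = A j ∧ Bj j.val = B j ∧ uj j.val = u j ∧ vj j.val = v j := by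
    refine ⟨fun j => if h : j < n then A ⟨j, h⟩ else 0, fun j => if h : j < n then B ⟨j, h⟩ else 0,
      fun j => if h : j < n then u ⟨j, h⟩ else 0, fun j => if h : j < n then v ⟨j, h⟩ else 0, ?_⟩
    intro j
    refine ⟨?_, ?_, ?_, ?_⟩ <;> · dsimp only; rw [dif_pos j.isLt]
  have hAjv : ∀ j : Fin n, Aj j.val = A j := fun j => (hd j).1
  have hBjv : ∀ j : Fin n, Bj j.val = B j := fun j => (hd j).2.1
  have hujv : ∀ j : Fin n, uj j.val = u j := fun j => (hd j).2.2.1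
  have hvjv : ∀ j : Fin n, vj j.val = v j := fun j => (hd j).2.2.2
  -- tents
  obtain ⟨tent, htdef⟩ : ∃ tent : ℕ → ℝ → ℝ,
      ∀ j t, tent j t = min (uj j + (2/g) * |t - Aj j|) (vj j + (2/g) * |t - Bj j|) :=
    ⟨_, fun _ _ => rfl⟩
  have htentc : ∀ j, Continuous (tent j) := by
    intro j
    have : tent j = fun t => min (uj j + (2/g) * |t - Aj j|) (vj j + (2/g) * |t - Bj j|) :=
      funext fun t => htdef j t
    rw [this]
    exact (continuous_const.add (continuous_const.mul
        ((continuous_id.sub continuous_const).abs))).min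
      (continuous_const.add (continuous_const.mul ((continuous_id.sub continuous_const).abs)))
  -- the ceilings
  obtain ⟨C, hC0, hCs⟩ : ∃ C : ℕ → ℝ → ℝ, (∀ t, C 0 t = 1) ∧ (∀ j t, C (j + 1) t =
      if j < n then min (C j t) (min (C j t - μ j) (tent j t) - μ j) else C j t) :=
    ⟨fun j => Nat.rec (motive := fun _ => ℝ → ℝ) (fun _ => 1)
      (fun i Ci => fun t => if i < n then min (Ci t) (min (Ci t - μ i) (tent i t) - μ i) else Ci t)
      j, fun _ => rfl, fun _ _ => rfl⟩
  have hCc : ∀ j, Continuous (C j) := by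
    intro j
    induction j with
    | zero =>
      have : C 0 = fun _ => 1 := funext fun t => hC0 t
      rw [this]; exact continuous_const
    | succ i ih =>
      have : C (i+1) = fun t =>
          if i < n then min (C i t) (min (C i t - μ i) (tent i t) - μ i) else C i t :=
        funext fun t => hCs i t
      rw [this]
      by_cases h : i < n
      · simp only [if_pos h]
        exact ih.min (((ih.sub continuous_const).min (htentc i)).sub continuous_const)
      · simp only [if_neg h]; exact ih
  have hCmono : ∀ j t, C (j+1) t ≤ C j t := by
    intro j t
    rw [hCs]
    split
    · exact min_le_left _ _
    · exact le_rfl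
  have hCchain : ∀ i j : ℕ, i ≤ j → ∀ t, C j t ≤ C i t := by
    intro i j hij
    induction j with
    | zero => intro t; rw [Nat.le_zero.1 hij]
    | succ k ih =>
      intro t
      rcases Nat.lt_or_ge i (k+1) with h | h
      · exact le_trans (hCmono k t) (ih (Nat.lt_succ_iff.1 h) t)
      · have : i = k+1 := le_antisymm hij h
        rw [this]
  have hC_le_one : ∀ j t, C j t ≤ 1 := fun j t => by
    have := hCchain 0 j (Nat.zero_le j) t
    rwa [hC0] at this
  -- tents are at least Λ
  have htwo : (2:ℝ)/g * g = 2 := by field_simp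
  have htentΛ : ∀ j, j < n → ∀ t, Λ ≤ tent j t := by
    intro j hj t
    have hu : Λ ≤ uj j := by
      rw [hd ⟨j, hj⟩ |>.2.2.1]
      have := (hΛle (Sum.inl ⟨j, hj⟩)).1
      rwa [hlvinl] at this
    have hv : Λ ≤ vj j := by
      rw [hd ⟨j, hj⟩ |>.2.2.2]
      have := (hΛle (Sum.inr ⟨j, hj⟩)).1
      rwa [hlvinr] at this
    have h1 : (0:ℝ) ≤ 2/g * |t - Aj j| := by positivity
    have h2 : (0:ℝ) ≤ 2/g * |t - Bj j| := by positivity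
    rw [htdef]
    exact le_min (by linarith) (by linarith)
  -- invariant: global lower bound
  have hInv2 : ∀ j t, γ j ≤ C j t := by
    intro j
    induction j with
    | zero =>
      intro t
      rw [hC0]
      have := hγΛ 0
      linarith
    | succ i ih =>
      intro t
      rw [hCs]
      by_cases h : i < n
      · rw [if_pos h]
        apply le_min
        · exact le_trans (hγmono i) (ih t)
        · have h2 : Λ ≤ tent i t := htentΛ i h t
          have h3 := hstep1 i
          have h4 := hstep2 i
          have h5 := ih t
          rcases le_total (C i t - μ i) (tent i t) with hc | hc
          · rw [min_eq_left hc]; linarith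
          · rw [min_eq_right hc]; linarith
      · rw [if_neg h]
        exact le_trans (hγmono i) (ih t)
  -- pair index
  obtain ⟨pin, hpinl, hpinr⟩ : ∃ pin : Fin n ⊕ Fin n → ℕ,
      (∀ i : Fin n, pin (Sum.inl i) = i.val) ∧ (∀ i : Fin n, pin (Sum.inr i) = i.val) :=
    ⟨Sum.elim Fin.val Fin.val, fun _ => rfl, fun _ => rfl⟩
  -- invariant: clearance above strands still to be routed
  have hInv3 : ∀ j (w : Fin n ⊕ Fin n), j ≤ pin w → lv w + γ j ≤ C j (θ w) := by
    intro j
    induction j with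
    | zero =>
      intro w _
      rw [hC0]
      have h1 := (hΛle w).2
      have h2 := hγΛ 0
      linarith
    | succ i ih =>
      intro w hw
      have hiw : i < pin w := Nat.lt_of_succ_le hw
      have hin : i < n := by
        cases w with
        | inl k => rw [hpinl] at hiw; exact lt_of_lt_of_le hiw (Nat.le_of_lt_succ (Nat.lt_succ_of_lt k.isLt))
        | inr k => rw [hpinr] at hiw; exact lt_of_lt_of_le hiw (Nat.le_of_lt_succ (Nat.lt_succ_of_lt k.isLt))
      have hwa : w ≠ Sum.inl ⟨i, hin⟩ := by
        intro hcon
        rw [hcon, hpinl] at hiw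
        exact lt_irrefl _ hiw
      have hwb : w ≠ Sum.inr ⟨i, hin⟩ := by
        intro hcon
        rw [hcon, hpinr] at hiw
        exact lt_irrefl _ hiw
      have hga : g ≤ |θ w - Aj i| := by
        have he : Aj i = θ (Sum.inl ⟨i, hin⟩) := by
          rw [hθinl]
          exact (hd ⟨i, hin⟩).1
        rw [he]
        exact hgle _ _ hwa
      have hgb : g ≤ |θ w - Bj i| := by
        have he : Bj i = θ (Sum.inr ⟨i, hin⟩) := by
          rw [hθinr]
          exact (hd ⟨i, hin⟩).2.1
        rw [he]
        exact hgle _ _ hwb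
      have hu0 : 0 ≤ uj i := by
        rw [(hd ⟨i, hin⟩).2.2.1]
        have := (hlv01 (Sum.inl ⟨i, hin⟩)).1
        rw [hlvinl] at this
        linarith
      have hv0 : 0 ≤ vj i := by
        rw [(hd ⟨i, hin⟩).2.2.2]
        have := (hlv01 (Sum.inr ⟨i, hin⟩)).1
        rw [hlvinr] at this
        linarith
      have htb : (2:ℝ) ≤ tent i (θ w) := by
        have h1 : 2/g * g ≤ 2/g * |θ w - Aj i| :=
          mul_le_mul_of_nonneg_left hga (by positivity)
        have h2 : 2/g * g ≤ 2/g * |θ w - Bj i| :=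
          mul_le_mul_of_nonneg_left hgb (by positivity)
        rw [htwo] at h1 h2
        rw [htdef]
        exact le_min (by linarith) (by linarith)
      have hprev : lv w + γ i ≤ C i (θ w) := ih w (le_of_lt hiw)
      have hlvw : lv w < 1 := (hlv01 w).2
      have hγΛi := hγΛ i
      have h3 := hstep1 i
      have hμi := hμpos i
      rw [hCs, if_pos hin]
      apply le_min
      · have := hγmono i
        linarith
      · rcases le_total (C i (θ w) - μ i) (tent i (θ w)) with hc | hc
        · rw [min_eq_left hc]
          linarith
        · rw [min_eq_right hc]
          have : lv w + γ i ≤ 2 := by linarith [hΛhalf]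
          linarith
  -- the height functions
  obtain ⟨H, hH⟩ : ∃ H : Fin n → ℝ → ℝ,
      ∀ j t, H j t = min (C j.val t - μ j.val) (tent j.val t) :=
    ⟨fun j t => min (C j.val t - μ j.val) (tent j.val t), fun _ _ => rfl⟩
  have hHc : ∀ j, Continuous (H j) := by
    intro j
    have : H j = fun t => min (C j.val t - μ j.val) (tent j.val t) := funext fun t => hH j t
    rw [this]
    exact ((hCc j.val).sub continuous_const).min (htentc j.val)
  have hABg : ∀ j : Fin n, g ≤ |A j - B j| := by
    intro j
    have h := hgle (Sum.inl j) (Sum.inr j) (by simp)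
    rwa [hθinl, hθinr] at h
  have hu1 : ∀ j : Fin n, u j < 1 := fun j => by
    have := (hlv01 (Sum.inl j)).2; rwa [hlvinl] at this
  have hv1 : ∀ j : Fin n, v j < 1 := fun j => by
    have := (hlv01 (Sum.inr j)).2; rwa [hlvinr] at this
  have hu0' : ∀ j : Fin n, 0 < u j := fun j => by
    have := (hlv01 (Sum.inl j)).1; rwa [hlvinl] at this
  have hv0' : ∀ j : Fin n, 0 < v j := fun j => by
    have := (hlv01 (Sum.inr j)).1; rwa [hlvinr] at this
  -- endpoint values
  have hHA : ∀ j : Fin n, H j (A j) = u j := by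
    intro j
    have hCA : u j + γ j.val ≤ C j.val (A j) := by
      have h := hInv3 j.val (Sum.inl j) (le_of_eq (hpinl j).symm)
      rwa [hlvinl, hθinl] at h
    have h1 : u j < C j.val (A j) - μ j.val := by
      have := hγμ j.val
      linarith
    have h2 : tent j.val (A j) = min (u j) (v j + 2/g * |A j - B j|) := by
      rw [htdef, hAjv, hBjv, hujv, hvjv, sub_self, abs_zero, mul_zero, add_zero]
    have h3 : u j ≤ v j + 2/g * |A j - B j| := by
      have h4 : 2/g * g ≤ 2/g * |A j - B j| :=
        mul_le_mul_of_nonneg_left (hABg j) (by positivity)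
      rw [htwo] at h4
      have := hv0' j
      have := hu1 j
      linarith
    rw [hH, h2, min_eq_left h3, min_eq_right (le_of_lt h1)]
  have hHB : ∀ j : Fin n, H j (B j) = v j := by
    intro j
    have hCB : v j + γ j.val ≤ C j.val (B j) := by
      have h := hInv3 j.val (Sum.inr j) (le_of_eq (hpinr j).symm)
      rwa [hlvinr, hθinr] at h
    have h1 : v j < C j.val (B j) - μ j.val := by
      have := hγμ j.val
      linarith
    have h2 : tent j.val (B j) = min (u j + 2/g * |B j - A j|) (v j) := by
      rw [htdef, hAjv, hBjv, hujv, hvjv, sub_self, abs_zero, mul_zero, add_zero]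
    have h3 : v j ≤ u j + 2/g * |B j - A j| := by
      have h4 : 2/g * g ≤ 2/g * |B j - A j| := by
        apply mul_le_mul_of_nonneg_left ?_ (by positivity)
        rw [abs_sub_comm]; exact hABg j
      rw [htwo] at h4
      have := hu0' j
      have := hv1 j
      linarith
    rw [hH, h2, min_eq_right h3, min_eq_right (le_of_lt h1)]
  -- bounds
  have hHbnd : ∀ (j : Fin n) (t : ℝ), H j t ∈ Set.Ioo (0:ℝ) 1 := by
    intro j t
    rw [hH]
    constructor
    · apply lt_min
      · have h1 := hInv2 j.val t
        have h2 := hγμ j.val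
        linarith
      · have := htentΛ j.val j.isLt t
        linarith
    · have h1 : min (C j.val t - μ j.val) (tent j.val t) ≤ C j.val t - μ j.val :=
        min_le_left _ _
      have h2 := hC_le_one j.val t
      have h3 := hμpos j.val
      linarith
  -- strict separation between distinct curves
  have hkey : ∀ i j : Fin n, i.val < j.val → ∀ t, H j t < H i t := by
    intro i j hij t
    have h1 : H j t ≤ C j.val t - μ j.val := by
      rw [hH]; exact min_le_left _ _
    have h2 : C j.val t ≤ C (i.val + 1) t := hCchain (i.val+1) j.val hij t
    have h3 : C (i.val+1) t ≤ min (C i.val t - μ i.val) (tent i.val t) - μ i.val := by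
      rw [hCs, if_pos i.isLt]
      exact min_le_right _ _
    have h4 : min (C i.val t - μ i.val) (tent i.val t) = H i t := (hH i t).symm
    have h5 := hμpos i.val
    have h6 := hμpos j.val
    rw [h4] at h3
    linarith
  refine ⟨H, hHc, hHA, hHB, hHbnd, ?_⟩
  intro i j hij t
  rcases lt_or_gt_of_ne (fun h : i.val = j.val => hij (Fin.ext h)) with h | h
  · exact (hkey i j h t).ne'
  · exact (hkey j i h t).ne

private lemma annulus_coords (sA sB : Set ℂ)
    (hAconv : Convex ℝ sA) (hAcomp : IsCompact sA) (hA0 : (0:ℂ) ∈ interior sA)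
    (hBconv : Convex ℝ sB) (hBclosed : IsClosed sB) (hBbdd : Bornology.IsBounded sB)
    (hAB : sA ⊆ interior sB) :
    ∃ Φ : ℝ → ℝ → ℂ,
      ContinuousOn (fun p : ℝ × ℝ => Φ p.1 p.2) {p : ℝ × ℝ | p.2 ∈ Set.Icc 0 1} ∧
      (∀ α α' l l', α ∈ Set.Ioo (-Real.pi) Real.pi → α' ∈ Set.Ioo (-Real.pi) Real.pi →
        l ∈ Set.Ioo (0:ℝ) 1 → l' ∈ Set.Ioo (0:ℝ) 1 → Φ α l = Φ α' l' → α = α' ∧ l = l') ∧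
      (∀ α l, l ∈ Set.Ioo (0:ℝ) 1 → Φ α l ∈ sB ∧ Φ α l ∉ sA) ∧
      (∀ z : ℂ, z ∉ sA → z ∈ interior sB →
        ∃ l, l ∈ Set.Ioo (0:ℝ) 1 ∧ Φ (Complex.arg z) l = z) := by
  have hAnhds : sA ∈ nhds (0:ℂ) := mem_interior_iff_mem_nhds.1 hA0
  have hBnhds : sB ∈ nhds (0:ℂ) :=
    mem_interior_iff_mem_nhds.1 (hAB (interior_subset hA0))
  have habsA : Absorbent ℝ sA := absorbent_nhds_zero hAnhds
  have habsB : Absorbent ℝ sB := absorbent_nhds_zero hBnhds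
  have hvonA : Bornology.IsVonNBounded ℝ sA :=
    NormedSpace.isVonNBounded_of_isBounded _ hAcomp.isBounded
  have hvonB : Bornology.IsVonNBounded ℝ sB :=
    NormedSpace.isVonNBounded_of_isBounded _ hBbdd
  have hgAc : Continuous (gauge sA) := continuous_gauge hAconv hAnhds
  have hgBc : Continuous (gauge sB) := continuous_gauge hBconv hBnhds
  have hgApos : ∀ z : ℂ, z ≠ 0 → 0 < gauge sA z := fun z hz => (gauge_pos habsA hvonA).2 hz
  have hgBpos : ∀ z : ℂ, z ≠ 0 → 0 < gauge sB z := fun z hz => (gauge_pos habsB hvonB).2 hz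
  have hmemA : ∀ z : ℂ, gauge sA z ≤ 1 → z ∈ sA := by
    intro z hz
    have := (gauge_le_one_iff_mem_closure hAconv hAnhds).1 hz
    rwa [hAcomp.isClosed.closure_eq] at this
  have hmemB : ∀ z : ℂ, gauge sB z ≤ 1 → z ∈ sB := by
    intro z hz
    have := (gauge_le_one_iff_mem_closure hBconv hBnhds).1 hz
    rwa [hBclosed.closure_eq] at this
  have hBA : ∀ z : ℂ, z ≠ 0 → gauge sB z < gauge sA z := by
    intro z hz
    have hA1 : 0 < gauge sA z := hgApos z hz
    have hw1 : gauge sA ((gauge sA z)⁻¹ • z) = 1 := by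
      rw [gauge_smul_of_nonneg (le_of_lt (inv_pos.2 hA1))]
      simp only [smul_eq_mul]
      field_simp
    have hwA : (gauge sA z)⁻¹ • z ∈ sA := hmemA _ (le_of_eq hw1)
    have hwB : gauge sB ((gauge sA z)⁻¹ • z) < 1 := interior_subset_gauge_lt_one sB (hAB hwA)
    rw [gauge_smul_of_nonneg (le_of_lt (inv_pos.2 hA1))] at hwB
    simp only [smul_eq_mul] at hwB
    rwa [inv_mul_lt_iff₀ hA1, mul_one] at hwB
  -- the direction map
  have hec : Continuous (fun α : ℝ => Complex.exp (α * Complex.I)) :=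
    Complex.continuous_exp.comp (Complex.continuous_ofReal.mul continuous_const)
  have hene : ∀ α : ℝ, Complex.exp (α * Complex.I) ≠ 0 := fun α => Complex.exp_ne_zero _
  -- the denominator
  set den : ℝ → ℝ → ℝ := fun α l =>
    gauge sA (Complex.exp (α * Complex.I)) -
      l * (gauge sA (Complex.exp (α * Complex.I)) - gauge sB (Complex.exp (α * Complex.I)))
    with hden
  have hdenpos : ∀ α l, l ∈ Set.Icc (0:ℝ) 1 → 0 < den α l := by
    intro α l hl
    have h1 := hgBpos _ (hene α)
    have h2 := hBA _ (hene α)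
    have heq : den α l = (1 - l) * gauge sA (Complex.exp (α * Complex.I))
        + l * gauge sB (Complex.exp (α * Complex.I)) := by
      simp only [hden]; ring
    rw [heq]
    have e1 : (1-l) * gauge sB (Complex.exp (α * Complex.I)) ≤
        (1-l) * gauge sA (Complex.exp (α * Complex.I)) :=
      mul_le_mul_of_nonneg_left (le_of_lt h2) (by linarith [hl.2])
    nlinarith [hl.1, hl.2, h1]
  refine ⟨fun α l => (den α l)⁻¹ • Complex.exp (α * Complex.I), ?_, ?_, ?_, ?_⟩
  · -- continuity
    apply ContinuousOn.smul (f := fun p : ℝ × ℝ => (den p.1 p.2)⁻¹)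
      (g := fun p : ℝ × ℝ => Complex.exp (p.1 * Complex.I))
    · apply ContinuousOn.inv₀
      · apply Continuous.continuousOn
        apply Continuous.sub
        · exact (hgAc.comp hec).comp continuous_fst
        · exact continuous_snd.mul (((hgAc.comp hec).comp continuous_fst).sub
            ((hgBc.comp hec).comp continuous_fst))
      · intro p hp
        exact (hdenpos p.1 p.2 hp).ne'
    · exact (hec.comp continuous_fst).continuousOn
  · -- injectivity
    intro α α' l l' hα hα' hl hl' heq
    dsimp only at heq
    have hlI : l ∈ Set.Icc (0:ℝ) 1 := ⟨le_of_lt hl.1, le_of_lt hl.2⟩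
    have hlI' : l' ∈ Set.Icc (0:ℝ) 1 := ⟨le_of_lt hl'.1, le_of_lt hl'.2⟩
    have hd := hdenpos α l hlI
    have hd' := hdenpos α' l' hlI'
    have hnorm : (den α l)⁻¹ = (den α' l')⁻¹ := by
      have h1 := congrArg norm heq
      rw [norm_smul, norm_smul,
        Complex.norm_exp_ofReal_mul_I, Complex.norm_exp_ofReal_mul_I,
        Real.norm_eq_abs, Real.norm_eq_abs, abs_of_pos (inv_pos.2 hd),
        abs_of_pos (inv_pos.2 hd'), mul_one, mul_one] at h1
      exact h1
    have hdeq : den α l = den α' l' := by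
      have := congrArg (fun x : ℝ => x⁻¹) hnorm
      simpa [inv_inv] using this
    have hexp : Complex.exp (α * Complex.I) = Complex.exp (α' * Complex.I) := by
      rw [hnorm] at heq
      exact smul_right_injective ℂ ((inv_pos.2 hd').ne') heq
    have hIoc : ∀ β : ℝ, β ∈ Set.Ioo (-Real.pi) Real.pi →
        toIocMod Real.two_pi_pos (-Real.pi) β = β := by
      intro β hβ
      exact (toIocMod_eq_self _).2 ⟨hβ.1, by linarith [hβ.2, Real.pi_pos]⟩
    have hαα : α = α' := by
      have h1 := congrArg Complex.arg hexp
      rw [Complex.arg_exp_mul_I, Complex.arg_exp_mul_I, hIoc α hα, hIoc α' hα'] at h1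
      exact h1
    refine ⟨hαα, ?_⟩
    rw [hαα] at hdeq
    have hD : gauge sA (Complex.exp (α' * Complex.I)) -
        gauge sB (Complex.exp (α' * Complex.I)) ≠ 0 :=
      sub_ne_zero.2 (hBA _ (hene α')).ne'
    simp only [hden] at hdeq
    have : l * (gauge sA (Complex.exp (α' * Complex.I)) -
        gauge sB (Complex.exp (α' * Complex.I))) = l' * (gauge sA (Complex.exp (α' * Complex.I)) -
        gauge sB (Complex.exp (α' * Complex.I))) := by linarith
    exact mul_right_cancel₀ hD this
  · -- membership
    intro α l hl
    dsimp only
    have hlI : l ∈ Set.Icc (0:ℝ) 1 := ⟨le_of_lt hl.1, le_of_lt hl.2⟩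
    have hd := hdenpos α l hlI
    have hgAv : gauge sA ((den α l)⁻¹ • Complex.exp (α * Complex.I)) =
        (den α l)⁻¹ * gauge sA (Complex.exp (α * Complex.I)) := by
      rw [gauge_smul_of_nonneg (le_of_lt (inv_pos.2 hd))]; simp [smul_eq_mul]
    have hgBv : gauge sB ((den α l)⁻¹ • Complex.exp (α * Complex.I)) =
        (den α l)⁻¹ * gauge sB (Complex.exp (α * Complex.I)) := by
      rw [gauge_smul_of_nonneg (le_of_lt (inv_pos.2 hd))]; simp [smul_eq_mul]
    have h2 := hBA _ (hene α)
    have h1 := hgBpos _ (hene α)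
    constructor
    · apply hmemB
      rw [hgBv]
      rw [inv_mul_le_iff₀ hd, mul_one]
      simp only [hden]
      nlinarith [hl.2, hl.1]
    · intro hmem
      have h3 := gauge_le_one_of_mem hmem
      rw [hgAv, inv_mul_le_iff₀ hd, mul_one] at h3
      simp only [hden] at h3
      nlinarith [hl.1, hl.2]
  · -- inversion
    intro z hzA hzB
    have hz0 : z ≠ 0 := by
      intro h
      exact hzA (h ▸ interior_subset hA0)
    have ha1 : 1 < gauge sA z := by
      by_contra h
      push_neg at h
      exact hzA (hmemA z h)
    have hb1 : gauge sB z < 1 := interior_subset_gauge_lt_one sB hzB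
    have hab : gauge sB z < gauge sA z := hBA z hz0
    set a := gauge sA z with hadef
    set bb := gauge sB z with hbdef
    refine ⟨(a - 1)/(a - bb), ⟨div_pos (by linarith) (by linarith), ?_⟩, ?_⟩
    · rw [div_lt_one (by linarith)]
      linarith
    · dsimp only
      have habs0 : (0:ℝ) < ‖z‖ := norm_pos_iff.mpr hz0
      have hexpz : Complex.exp ((Complex.arg z : ℝ) * Complex.I) = (‖z‖)⁻¹ • z := by
        have h := Complex.norm_mul_exp_arg_mul_I z
        have h2 : (‖z‖ : ℝ) • Complex.exp ((Complex.arg z : ℝ) * Complex.I) = z := by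
          rw [Complex.real_smul]; exact_mod_cast h
        have h3 := congrArg (fun w : ℂ => (‖z‖)⁻¹ • w) h2
        rw [smul_smul, inv_mul_cancel₀ habs0.ne', one_smul] at h3
        exact h3
      have hinv0 : (0:ℝ) ≤ (‖z‖)⁻¹ := le_of_lt (inv_pos.2 habs0)
      have hgAe : gauge sA (Complex.exp ((Complex.arg z : ℝ) * Complex.I)) =
          (‖z‖)⁻¹ * a := by
        rw [hexpz, gauge_smul_of_nonneg hinv0, smul_eq_mul]
      have hgBe : gauge sB (Complex.exp ((Complex.arg z : ℝ) * Complex.I)) =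
          (‖z‖)⁻¹ * bb := by
        rw [hexpz, gauge_smul_of_nonneg hinv0, smul_eq_mul]
      have habne : a - bb ≠ 0 := by linarith
      have hlval : ((a-1)/(a-bb)) * (a - bb) = a - 1 := div_mul_cancel₀ _ habne
      have hdenv : den (Complex.arg z) ((a-1)/(a-bb)) = (‖z‖)⁻¹ := by
        simp only [hden, hgAe, hgBe]
        have hr : (‖z‖)⁻¹ * a - ((a-1)/(a-bb)) * ((‖z‖)⁻¹ * a -
            (‖z‖)⁻¹ * bb) = (‖z‖)⁻¹ * (a - ((a-1)/(a-bb)) * (a - bb)) := by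
          ring
        rw [hr, hlval]
        have : a - (a - 1) = 1 := by ring
        rw [this, mul_one]
      rw [hdenv, inv_inv, hexpz, smul_smul, mul_inv_cancel₀ habs0.ne', one_smul]

/-- cross product of two complex numbers viewed as plane vectors -/
private def crossC (z w : ℂ) : ℝ := z.re * w.im - z.im * w.re

private lemma pick_omega {W : Type*} [Fintype W] (p : W → ℂ) (hp : Function.Injective p)
    (z0 : ℂ) (r : ℝ) (hr : 0 < r) :
    ∃ ω ∈ Metric.ball z0 r, (∀ k, (p k - ω).im ≠ 0) ∧
      (∀ k l, k ≠ l → crossC (p k - ω) (p l - ω) ≠ 0) := by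
  classical
  have hroot : ∀ (c m : ℝ), m ≠ 0 → {s : ℝ | c + s * m = 0}.Finite := by
    intro c m hm
    apply Set.Finite.subset (Set.finite_singleton (-c / m))
    intro s hs
    simp only [Set.mem_setOf_eq] at hs
    simp only [Set.mem_singleton_iff]
    field_simp
    linarith
  -- choose a good slope T
  obtain ⟨T, hT0, hTgood⟩ : ∃ T : ℝ, T ≠ 0 ∧ ∀ k l : W, k ≠ l →
      (p l - p k).im - T * (p l - p k).re ≠ 0 := by
    have hbadfin : (({0} : Set ℝ) ∪
        ⋃ q ∈ {q : W × W | q.1 ≠ q.2},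
          {T : ℝ | (p q.2 - p q.1).im + T * (-(p q.2 - p q.1).re) = 0}).Finite := by
      apply Set.Finite.union (Set.finite_singleton 0)
      apply Set.Finite.biUnion (Set.Finite.subset Set.finite_univ (Set.subset_univ _))
      intro q hq
      rcases eq_or_ne ((p q.2 - p q.1).re) 0 with h0 | h0
      · -- then im ≠ 0, so the set is empty
        have him : (p q.2 - p q.1).im ≠ 0 := by
          intro him
          apply hq
          apply hp
          have hz : p q.2 - p q.1 = 0 := Complex.ext h0 him
          exact (sub_eq_zero.1 hz).symm
        have hcon : ∀ T : ℝ, (p q.2 - p q.1).im + T * (-(p q.2 - p q.1).re) =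
            (p q.2 - p q.1).im := by
          intro T; rw [h0]; ring
        have : {T : ℝ | (p q.2 - p q.1).im + T * (-(p q.2 - p q.1).re) = 0} = ∅ := by
          ext T
          simp only [Set.mem_setOf_eq, Set.mem_empty_iff_false, iff_false]
          rw [hcon]
          exact him
        rw [this]; exact Set.finite_empty
      · exact hroot _ _ (neg_ne_zero.2 h0)
    obtain ⟨T, hT⟩ := (Set.Infinite.diff (Set.infinite_univ (α := ℝ)) hbadfin).nonempty
    have hT2 := hT.2
    refine ⟨T, ?_, ?_⟩
    · intro h
      exact hT2 (Set.mem_union_left _ (by simp [h]))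
    · intro k l hkl h
      apply hT2
      apply Set.mem_union_right
      refine Set.mem_biUnion (show ((k,l) : W × W) ∈ {q : W × W | q.1 ≠ q.2} from hkl) ?_
      simp only [Set.mem_setOf_eq]
      ring_nf
      ring_nf at h
      linarith
  -- the direction vector
  set v : ℂ := 1 + (T:ℂ) * Complex.I with hv
  have hvabs : 0 < ‖v‖ := by
    apply norm_pos_iff.mpr
    intro h
    have := congrArg Complex.re h
    simp [hv] at this
  have hvre : v.re = 1 := by simp [hv]
  have hvim : v.im = T := by simp [hv]
  -- bad parameter values
  have hbadfin : ((⋃ k : W, {s : ℝ | (p k - z0).im + s * (-T) = 0}) ∪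
      ⋃ q ∈ {q : W × W | q.1 ≠ q.2},
        {s : ℝ | crossC (p q.1 - z0) (p q.2 - z0) +
          s * (T * ((p q.2 - p q.1).re) - ((p q.2 - p q.1).im)) = 0}).Finite := by
    apply Set.Finite.union
    · exact Set.finite_iUnion (fun k => hroot _ _ (neg_ne_zero.2 hT0))
    · apply Set.Finite.biUnion (Set.Finite.subset Set.finite_univ (Set.subset_univ _))
      intro q hq
      apply hroot
      intro h
      apply hTgood q.1 q.2 hq
      linarith
  -- choose the parameter s
  obtain ⟨s, hs⟩ := ((Set.Ioo_infinite (div_pos hr hvabs)).diff hbadfin).nonempty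
  obtain ⟨⟨hs0, hsr⟩, hsbad⟩ := hs
  refine ⟨z0 + (s:ℂ) * v, ?_, ?_, ?_⟩
  · rw [Metric.mem_ball, dist_eq_norm]
    have : z0 + (s:ℂ) * v - z0 = (s:ℂ) * v := by ring
    rw [this]
    rw [norm_mul]
    simp only [Complex.norm_real, Real.norm_eq_abs]
    rw [abs_of_pos hs0]
    calc s * ‖v‖ < (r / ‖v‖) * ‖v‖ := by
          apply mul_lt_mul_of_pos_right hsr hvabs
      _ = r := by field_simp
  · intro k
    have him : (p k - (z0 + (s:ℂ) * v)).im = (p k - z0).im + s * (-T) := by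
      simp [Complex.sub_im, Complex.add_im, Complex.mul_im, Complex.ofReal_re,
        Complex.ofReal_im, hvre, hvim]
      ring
    rw [him]
    intro h
    exact hsbad (Set.mem_union_left _ (Set.mem_iUnion.2 ⟨k, h⟩))
  · intro k l hkl
    have hcross : crossC (p k - (z0 + (s:ℂ) * v)) (p l - (z0 + (s:ℂ) * v)) =
        crossC (p k - z0) (p l - z0) +
          s * (T * ((p l - p k).re) - ((p l - p k).im)) := by
      simp only [crossC, Complex.sub_re, Complex.sub_im, Complex.add_re, Complex.add_im,
        Complex.mul_re, Complex.mul_im, Complex.ofReal_re, Complex.ofReal_im, hvre, hvim]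
      ring
    rw [hcross]
    intro h
    apply hsbad
    apply Set.mem_union_right
    exact Set.mem_biUnion (show ((k,l) : W × W) ∈ {q : W × W | q.1 ≠ q.2} from hkl)
      (by simpa using h)

/-- In a rectangle `R = [a,b] × [c,d]`, given `2n` pairwise distinct points
`x₁,…,xₙ,y₁,…,yₙ` in the interior of `R` and a compact convex set `Ω` in the
interior of `R` containing none of these points, there exist `n` pairwise
disjoint continuous injective curves in `R` avoiding `Ω`, the `j`-th one
joining `xⱼ` to `yⱼ`. -/
theorem disjoint_curves_in_rectangle (a b c d : ℝ) (hab : a < b) (hcd : c < d)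
    (n : ℕ) (x y : Fin n → ℝ × ℝ)
    (hx : ∀ j, x j ∈ Set.Ioo a b ×ˢ Set.Ioo c d)
    (hy : ∀ j, y j ∈ Set.Ioo a b ×ˢ Set.Ioo c d)
    (hxinj : Function.Injective x) (hyinj : Function.Injective y)
    (hxy : ∀ i j, x i ≠ y j)
    (Ω : Set (ℝ × ℝ)) (hΩcompact : IsCompact Ω) (hΩconvex : Convex ℝ Ω)
    (hΩint : Ω ⊆ Set.Ioo a b ×ˢ Set.Ioo c d)
    (hΩx : ∀ j, x j ∉ Ω) (hΩy : ∀ j, y j ∉ Ω) :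
    ∃ τ : Fin n → ℝ → ℝ × ℝ,
      (∀ j, ContinuousOn (τ j) (Set.Icc 0 1)) ∧
      (∀ j, Set.InjOn (τ j) (Set.Icc 0 1)) ∧
      (∀ j, τ j 0 = x j) ∧
      (∀ j, τ j 1 = y j) ∧
      (∀ j, τ j '' Set.Icc 0 1 ⊆ Set.Icc a b ×ˢ Set.Icc c d) ∧
      (∀ j, Disjoint (τ j '' Set.Icc 0 1) Ω) ∧
      (∀ i j, i ≠ j → Disjoint (τ i '' Set.Icc 0 1) (τ j '' Set.Icc 0 1)) := by
  classical
  rcases Nat.eq_zero_or_pos n with hn | hn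
  · subst hn
    exact ⟨fun j => j.elim0, fun j => j.elim0, fun j => j.elim0, fun j => j.elim0,
      fun j => j.elim0, fun j => j.elim0, fun j => j.elim0, fun i => i.elim0⟩
  -- the planar embedding into ℂ
  set m : ℝ × ℝ → ℂ := fun p => (p.1 : ℂ) + (p.2 : ℂ) * Complex.I with hm
  have hmre : ∀ p : ℝ × ℝ, (m p).re = p.1 := by intro p; simp [hm]
  have hmim : ∀ p : ℝ × ℝ, (m p).im = p.2 := by intro p; simp [hm]
  have hminj : Function.Injective m := by
    intro p q h
    have h1 := congrArg Complex.re h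
    have h2 := congrArg Complex.im h
    rw [hmre, hmre] at h1
    rw [hmim, hmim] at h2
    exact Prod.ext h1 h2
  have hmlin : IsLinearMap ℝ m := by
    constructor
    · intro p q
      simp only [hm, Prod.fst_add, Prod.snd_add]
      push_cast
      ring
    · intro r p
      simp only [hm, Prod.smul_fst, Prod.smul_snd, smul_eq_mul, Complex.real_smul]
      push_cast
      ring
  have hmcont : Continuous m := by
    apply Continuous.add
    · exact Complex.continuous_ofReal.comp continuous_fst
    · exact (Complex.continuous_ofReal.comp continuous_snd).mul continuous_const
  have hmsurj : ∀ z : ℂ, m (z.re, z.im) = z := by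
    intro z
    simp only [hm]
    exact Complex.re_add_im z
  have himg : ∀ S : Set (ℝ × ℝ), m '' S = {z : ℂ | (z.re, z.im) ∈ S} := by
    intro S
    ext z
    constructor
    · rintro ⟨p, hp, rfl⟩
      simpa [hmre, hmim] using hp
    · intro hz
      exact ⟨(z.re, z.im), hz, hmsurj z⟩
  -- complex versions of the sets
  set Roo : Set ℂ := m '' (Set.Ioo a b ×ˢ Set.Ioo c d) with hRoo
  set Rcl : Set ℂ := m '' (Set.Icc a b ×ˢ Set.Icc c d) with hRcl
  set ΩC : Set ℂ := m '' Ω with hΩC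
  have hRooOpen : IsOpen Roo := by
    rw [hRoo, himg]
    apply IsOpen.preimage (Continuous.prodMk Complex.continuous_re Complex.continuous_im)
    exact (isOpen_Ioo.prod isOpen_Ioo)
  have hRclComp : IsCompact Rcl := (isCompact_Icc.prod isCompact_Icc).image hmcont
  have hRclClosed : IsClosed Rcl := hRclComp.isClosed
  have hRclConv : Convex ℝ Rcl :=
    ((convex_Icc a b).prod (convex_Icc c d)).is_linear_image hmlin
  have hRclBdd : Bornology.IsBounded Rcl := hRclComp.isBounded
  have hRooRcl : Roo ⊆ Rcl := by
    rw [hRoo, hRcl]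
    apply Set.image_mono
    intro p hp
    exact ⟨⟨le_of_lt hp.1.1, le_of_lt hp.1.2⟩, ⟨le_of_lt hp.2.1, le_of_lt hp.2.2⟩⟩
  have hΩCRoo : ΩC ⊆ Roo := by
    rw [hΩC, hRoo]
    exact Set.image_mono hΩint
  have hΩCconv : Convex ℝ ΩC := hΩconvex.is_linear_image hmlin
  have hΩCcomp : IsCompact ΩC := hΩcompact.image hmcont
  -- the strand points
  set q : Fin n ⊕ Fin n → ℂ := fun w => m (Sum.elim x y w) with hq
  have hqinj : Function.Injective q := by
    intro w w' h
    have h2 : Sum.elim x y w = Sum.elim x y w' := hminj h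
    cases w with
    | inl i => cases w' with
      | inl i' => exact congrArg Sum.inl (hxinj (by simpa using h2))
      | inr i' => exact absurd (show x i = y i' by simpa using h2) (hxy i i')
    | inr i => cases w' with
      | inl i' => exact absurd (show x i' = y i by simpa using h2.symm) (hxy i' i)
      | inr i' => exact congrArg Sum.inr (hyinj (by simpa using h2))
  have hqRoo : ∀ w, q w ∈ Roo := by
    intro w
    rw [hRoo]
    refine ⟨Sum.elim x y w, ?_, rfl⟩
    cases w with
    | inl i => exact hx i
    | inr i => exact hy i
  have hqΩ : ∀ w, q w ∉ ΩC := by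
    intro w hw
    rw [hΩC] at hw
    obtain ⟨p, hp, hpq⟩ := hw
    have : p = Sum.elim x y w := hminj hpq
    subst this
    cases w with
    | inl i => exact hΩx i hp
    | inr i => exact hΩy i hp
  -- a fattened compact convex obstacle with nonempty interior
  obtain ⟨O, z0, ρ, hρpos, hOcomp, hOconv, hOsub, hORoo, hOpts, hOball⟩ :
      ∃ (O : Set ℂ) (z0 : ℂ) (ρ : ℝ), 0 < ρ ∧ IsCompact O ∧ Convex ℝ O ∧ ΩC ⊆ O ∧
        O ⊆ Roo ∧ (∀ w, q w ∉ O) ∧ Metric.ball z0 ρ ⊆ O := by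
    rcases Set.eq_empty_or_nonempty ΩC with hE | ⟨z0, hz0⟩
    · -- empty obstacle: use a small ball around a fresh point
      obtain ⟨yc, hyc⟩ : ∃ yc, yc ∈ Set.Ioo c d \ (⋃ w, {(q w).im}) :=
        ((Set.Ioo_infinite hcd).diff
          (Set.finite_iUnion (fun w => Set.finite_singleton _))).nonempty
      have hycIoo : yc ∈ Set.Ioo c d := hyc.1
      have hz0Roo : m ((a+b)/2, yc) ∈ Roo := by
        rw [hRoo]
        exact ⟨((a+b)/2, yc), ⟨⟨by linarith, by linarith⟩, hycIoo⟩, rfl⟩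
      have hz0q : ∀ w, q w ≠ m ((a+b)/2, yc) := by
        intro w h
        apply hyc.2
        refine Set.mem_iUnion.2 ⟨w, ?_⟩
        simp only [Set.mem_singleton_iff]
        rw [h, hmim]
      obtain ⟨ε, hεpos, hεball⟩ := Metric.isOpen_iff.1 hRooOpen _ hz0Roo
      have hWne : (Finset.univ : Finset (Fin n ⊕ Fin n)).Nonempty :=
        ⟨Sum.inl ⟨0, hn⟩, Finset.mem_univ _⟩
      set dmin : ℝ := Finset.univ.inf' hWne (fun w => dist (q w) (m ((a+b)/2, yc))) with hdmin
      have hdminpos : 0 < dmin := by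
        rw [hdmin, Finset.lt_inf'_iff]
        exact fun w _ => dist_pos.2 (hz0q w)
      refine ⟨Metric.closedBall (m ((a+b)/2, yc)) (min (ε/2) (dmin/2)), m ((a+b)/2, yc),
        min (ε/2) (dmin/2), by positivity,
        isCompact_closedBall _ _, convex_closedBall _ _,
        by rw [hE]; exact Set.empty_subset _, ?_, ?_, Metric.ball_subset_closedBall⟩
      · intro z hz
        apply hεball
        have h1 : dist z (m ((a+b)/2, yc)) ≤ min (ε/2) (dmin/2) := hz
        have h2 : min (ε/2) (dmin/2) ≤ ε/2 := min_le_left _ _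
        rw [Metric.mem_ball]
        linarith
      · intro w hw
        have h1 : dist (q w) (m ((a+b)/2, yc)) ≤ min (ε/2) (dmin/2) := hw
        have h2 : dmin ≤ dist (q w) (m ((a+b)/2, yc)) := Finset.inf'_le _ (Finset.mem_univ w)
        have h3 := min_le_right (ε/2) (dmin/2)
        linarith
    · -- nonempty obstacle: fatten it
      have hΩCclosed := hΩCcomp.isClosed
      obtain ⟨δ1, hδ1pos, hδ1⟩ := hΩCcomp.exists_cthickening_subset_open hRooOpen hΩCRoo
      have hWne : (Finset.univ : Finset (Fin n ⊕ Fin n)).Nonempty :=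
        ⟨Sum.inl ⟨0, hn⟩, Finset.mem_univ _⟩
      set dmin : ℝ := Finset.univ.inf' hWne (fun w => Metric.infDist (q w) ΩC) with hdmin
      have hdminpos : 0 < dmin := by
        rw [hdmin, Finset.lt_inf'_iff]
        intro w _
        exact (hΩCclosed.notMem_iff_infDist_pos ⟨z0, hz0⟩).1 (hqΩ w)
      have hρp : 0 < min δ1 (dmin/2) := by positivity
      refine ⟨Metric.cthickening (min δ1 (dmin/2)) ΩC, z0, min δ1 (dmin/2), hρp,
        hΩCcomp.cthickening, hΩCconv.cthickening _, Metric.self_subset_cthickening _, ?_, ?_, ?_⟩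
      · exact subset_trans (Metric.cthickening_mono (min_le_left _ _) _) hδ1
      · intro w hw
        have h1 : Metric.infDist (q w) ΩC ≤ min δ1 (dmin/2) := by
          have h2 := Metric.mem_cthickening_iff.1 hw
          have h3 := ENNReal.toReal_mono (by simp) h2
          rw [ENNReal.toReal_ofReal hρp.le] at h3
          exact h3
        have h2 : dmin ≤ Metric.infDist (q w) ΩC := Finset.inf'_le _ (Finset.mem_univ w)
        have h3 := min_le_right δ1 (dmin/2)
        linarith
      · exact subset_trans Metric.ball_subset_closedBall
          (Metric.closedBall_subset_cthickening hz0 _)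
  -- choose a generic center ω inside O
  obtain ⟨ω, hωball, hωim, hωcross⟩ := pick_omega q hqinj z0 ρ hρpos
  have hωO : ω ∈ O := hOball hωball
  obtain ⟨ρ', hρ'pos, hρ'ball⟩ : ∃ ρ', 0 < ρ' ∧ Metric.ball ω ρ' ⊆ O := by
    refine ⟨ρ - dist ω z0, ?_, ?_⟩
    · rw [Metric.mem_ball] at hωball; linarith
    · intro z hz
      apply hOball
      rw [Metric.mem_ball] at hz ⊢
      calc dist z z0 ≤ dist z ω + dist ω z0 := dist_triangle _ _ _
        _ < ρ := by linarith
  -- translated sets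
  set sA : Set ℂ := (fun z => z + (-ω)) '' O with hsA
  set sB : Set ℂ := (fun z => z + (-ω)) '' Rcl with hsB
  have hmemsA : ∀ u : ℂ, u ∈ sA ↔ u + ω ∈ O := by
    intro u
    constructor
    · rintro ⟨w, hw, rfl⟩
      have : w + -ω + ω = w := by ring
      rwa [this]
    · intro h
      exact ⟨u + ω, h, by ring⟩
  have hmemsB : ∀ u : ℂ, u ∈ sB ↔ u + ω ∈ Rcl := by
    intro u
    constructor
    · rintro ⟨w, hw, rfl⟩
      have : w + -ω + ω = w := by ring
      rwa [this]
    · intro h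
      exact ⟨u + ω, h, by ring⟩
  have htr : (fun z : ℂ => z + (-ω)) = (fun z : ℂ => -ω + z) := funext fun z => add_comm _ _
  have hsAconv : Convex ℝ sA := by
    rw [hsA, htr]; exact hOconv.translate _
  have hsBconv : Convex ℝ sB := by
    rw [hsB, htr]; exact hRclConv.translate _
  have hsAcomp : IsCompact sA := hOcomp.image (continuous_id.add continuous_const)
  have hsBcomp : IsCompact sB := hRclComp.image (continuous_id.add continuous_const)
  have hsA0 : (0:ℂ) ∈ interior sA := by
    rw [mem_interior]
    refine ⟨Metric.ball 0 ρ', ?_, Metric.isOpen_ball, Metric.mem_ball_self hρ'pos⟩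
    intro z hz
    rw [hmemsA]
    apply hρ'ball
    rw [Metric.mem_ball] at hz ⊢
    simpa [dist_eq_norm] using hz
  have hball_sB : ∀ (u : ℂ) (ε : ℝ), 0 < ε → Metric.ball (u + ω) ε ⊆ Roo →
      u ∈ interior sB := by
    intro u ε hε hball
    rw [mem_interior]
    refine ⟨Metric.ball u ε, ?_, Metric.isOpen_ball, Metric.mem_ball_self hε⟩
    intro v hv
    rw [hmemsB]
    apply hRooRcl
    apply hball
    rw [Metric.mem_ball] at hv ⊢
    rwa [dist_add_right]
  have hsAB : sA ⊆ interior sB := by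
    intro u hu
    have huO : u + ω ∈ O := (hmemsA u).1 hu
    obtain ⟨ε, hεpos, hεball⟩ := Metric.isOpen_iff.1 hRooOpen _ (hORoo huO)
    exact hball_sB u ε hεpos hεball
  obtain ⟨Φ, hΦcont, hΦinj, hΦmem, hΦinv⟩ :=
    annulus_coords sA sB hsAconv hsAcomp hsA0 hsBconv hsBcomp.isClosed hsBcomp.isBounded hsAB
  -- coordinates of the strands
  have huvA : ∀ w, q w - ω ∉ sA := by
    intro w hw
    rw [hmemsA] at hw
    have : q w - ω + ω = q w := by ring
    rw [this] at hw
    exact hOpts w hw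
  have huvB : ∀ w, q w - ω ∈ interior sB := by
    intro w
    obtain ⟨ε, hεpos, hεball⟩ := Metric.isOpen_iff.1 hRooOpen _ (hqRoo w)
    apply hball_sB _ ε hεpos
    have : q w - ω + ω = q w := by ring
    rwa [this]
  have hchoice := fun w => hΦinv (q w - ω) (huvA w) (huvB w)
  choose lvl hlvl1 hlvl2 using hchoice
  have huv0 : ∀ w, q w - ω ≠ 0 := by
    intro w h
    have : q w = ω := by
      have := sub_eq_zero.1 h
      exact this
    exact hOpts w (this ▸ hωO)
  have hαIoo : ∀ w, Complex.arg (q w - ω) ∈ Set.Ioo (-Real.pi) Real.pi := by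
    intro w
    have h1 := Complex.arg_mem_Ioc (q w - ω)
    refine ⟨h1.1, lt_of_le_of_ne h1.2 ?_⟩
    intro h
    exact hωim w (Complex.arg_eq_pi_iff.1 h).2
  have hcross_smul : ∀ (s : ℝ) (z : ℂ), crossC ((s : ℂ) * z) z = 0 := by
    intro s z
    simp only [crossC, Complex.mul_re, Complex.mul_im, Complex.ofReal_re, Complex.ofReal_im]
    ring
  have hαinj : ∀ w w', w ≠ w' → Complex.arg (q w - ω) ≠ Complex.arg (q w' - ω) := by
    intro w w' hne h
    apply hωcross w w' hne
    have h1 := Complex.norm_mul_exp_arg_mul_I (q w - ω)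
    have h2 := Complex.norm_mul_exp_arg_mul_I (q w' - ω)
    have habs' : (‖q w' - ω‖ : ℝ) ≠ 0 := norm_ne_zero_iff.mpr (huv0 w')
    have h1' : (‖q w - ω‖ : ℝ) •
        Complex.exp ((Complex.arg (q w - ω) : ℝ) * Complex.I) = q w - ω := by
      rw [Complex.real_smul]; exact_mod_cast h1
    have h2' : (‖q w' - ω‖ : ℝ) •
        Complex.exp ((Complex.arg (q w' - ω) : ℝ) * Complex.I) = q w' - ω := by
      rw [Complex.real_smul]; exact_mod_cast h2
    have e2 : Complex.exp ((Complex.arg (q w' - ω) : ℝ) * Complex.I) =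
        ((‖q w' - ω‖)⁻¹ : ℝ) • (q w' - ω) := by
      have h3 := congrArg (fun zz : ℂ => ((‖q w' - ω‖)⁻¹ : ℝ) • zz) h2'
      rw [smul_smul, inv_mul_cancel₀ habs', one_smul] at h3
      exact h3
    have heq : q w - ω =
        ((‖q w - ω‖ * (‖q w' - ω‖)⁻¹ : ℝ)) • (q w' - ω) := by
      calc q w - ω = (‖q w - ω‖ : ℝ) •
            Complex.exp ((Complex.arg (q w - ω) : ℝ) * Complex.I) := h1'.symm
        _ = (‖q w - ω‖ : ℝ) •
            Complex.exp ((Complex.arg (q w' - ω) : ℝ) * Complex.I) := by rw [h]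
        _ = (‖q w - ω‖ : ℝ) •
            (((‖q w' - ω‖)⁻¹ : ℝ) • (q w' - ω)) := by rw [e2]
        _ = _ := by rw [smul_smul]
    rw [heq, Complex.real_smul]
    exact hcross_smul _ _
  -- route the curves in coordinates
  obtain ⟨H, hHc, hHA, hHB, hHbnd, hHdisj⟩ :=
    strip_route n (fun j => Complex.arg (q (Sum.inl j) - ω))
      (fun j => Complex.arg (q (Sum.inr j) - ω))
      (fun j => lvl (Sum.inl j)) (fun j => lvl (Sum.inr j))
      (by
        intro w w' hww
        have h' : Complex.arg (q w - ω) = Complex.arg (q w' - ω) := by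
          cases w <;> cases w' <;> exact hww
        by_contra hne
        exact hαinj w w' hne h')
      (by
        intro w
        have : Sum.elim (fun j => lvl (Sum.inl j)) (fun j => lvl (Sum.inr j)) w = lvl w := by
          cases w <;> rfl
        rw [this]
        exact hlvl1 w)
  -- the curves
  set σ : Fin n → ℝ → ℝ := fun j t => Complex.arg (q (Sum.inl j) - ω) +
    t * (Complex.arg (q (Sum.inr j) - ω) - Complex.arg (q (Sum.inl j) - ω)) with hσ
  set γc : Fin n → ℝ → ℂ := fun j t => ω + Φ (σ j t) (H j (σ j t)) with hγc
  set τ : Fin n → ℝ → ℝ × ℝ := fun j t => ((γc j t).re, (γc j t).im) with hτ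
  have hABne : ∀ j : Fin n,
      Complex.arg (q (Sum.inl j) - ω) ≠ Complex.arg (q (Sum.inr j) - ω) :=
    fun j => hαinj _ _ (by simp)
  have hσcont : ∀ j, Continuous (σ j) := by
    intro j
    apply Continuous.add continuous_const
    exact continuous_id.mul continuous_const
  have hσmem : ∀ (j : Fin n) (t : ℝ), t ∈ Set.Icc (0:ℝ) 1 →
      σ j t ∈ Set.Ioo (-Real.pi) Real.pi := by
    intro j t ht
    have hA := hαIoo (Sum.inl j)
    have hB := hαIoo (Sum.inr j)
    simp only [hσ]
    rcases le_total (Complex.arg (q (Sum.inl j) - ω)) (Complex.arg (q (Sum.inr j) - ω)) with hc | hc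
    · constructor
      · nlinarith [ht.1, ht.2, hA.1, hA.2, hB.1, hB.2]
      · nlinarith [ht.1, ht.2, hA.1, hA.2, hB.1, hB.2]
    · constructor
      · nlinarith [ht.1, ht.2, hA.1, hA.2, hB.1, hB.2]
      · nlinarith [ht.1, ht.2, hA.1, hA.2, hB.1, hB.2]
  have hσ0 : ∀ j, σ j 0 = Complex.arg (q (Sum.inl j) - ω) := by
    intro j; simp [hσ]
  have hσ1 : ∀ j, σ j 1 = Complex.arg (q (Sum.inr j) - ω) := by
    intro j; simp [hσ]
  -- continuity of curves
  have hγcont : ∀ j, ContinuousOn (γc j) (Set.Icc 0 1) := by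
    intro j
    apply ContinuousOn.add continuousOn_const
    have hin : Continuous (fun t => (σ j t, H j (σ j t))) :=
      (hσcont j).prodMk ((hHc j).comp (hσcont j))
    have hmaps : ∀ t : ℝ, (σ j t, H j (σ j t)) ∈ {p : ℝ × ℝ | p.2 ∈ Set.Icc 0 1} := by
      intro t
      have := hHbnd j (σ j t)
      exact ⟨le_of_lt this.1, le_of_lt this.2⟩
    exact (hΦcont.comp hin.continuousOn (fun t _ => hmaps t)) |>.congr (fun t _ => rfl)
  have hτcont : ∀ j, ContinuousOn (τ j) (Set.Icc 0 1) := by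
    intro j
    exact (Complex.continuous_re.comp_continuousOn (hγcont j)).prodMk
      (Complex.continuous_im.comp_continuousOn (hγcont j))
  -- curves recover their endpoints
  have hγ0 : ∀ j, γc j 0 = q (Sum.inl j) := by
    intro j
    simp only [hγc]
    rw [hσ0 j, hHA j, hlvl2 (Sum.inl j)]
    ring
  have hγ1 : ∀ j, γc j 1 = q (Sum.inr j) := by
    intro j
    simp only [hγc]
    rw [hσ1 j, hHB j, hlvl2 (Sum.inr j)]
    ring
  -- basic point equality: recovering a plane point from its complex version
  have hback : ∀ (p : ℝ × ℝ) (z : ℂ), z = m p → (z.re, z.im) = p := by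
    rintro p z rfl
    rw [hmre, hmim]
  -- equality of curve points forces equal parameters-data
  have hsame : ∀ (i j : Fin n) (s t : ℝ), s ∈ Set.Icc (0:ℝ) 1 → t ∈ Set.Icc (0:ℝ) 1 →
      τ i s = τ j t → σ i s = σ j t ∧ H i (σ i s) = H j (σ j t) := by
    intro i j s t hs ht hteq
    have hγeq : γc i s = γc j t := by
      have h1 := congrArg Prod.fst hteq
      have h2 := congrArg Prod.snd hteq
      simp only [hτ] at h1 h2
      exact Complex.ext h1 h2
    have hΦeq : Φ (σ i s) (H i (σ i s)) = Φ (σ j t) (H j (σ j t)) := by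
      have := congrArg (fun z => z - ω) hγeq
      simp only [hγc] at this
      simpa using this
    exact hΦinj _ _ _ _ (hσmem i s hs) (hσmem j t ht)
      (hHbnd i (σ i s)) (hHbnd j (σ j t)) hΦeq
  refine ⟨τ, hτcont, ?_, ?_, ?_, ?_, ?_, ?_⟩
  · -- injectivity
    intro j s hs t ht hteq
    obtain ⟨hσeq, -⟩ := hsame j j s t hs ht hteq
    simp only [hσ] at hσeq
    have hD : Complex.arg (q (Sum.inr j) - ω) - Complex.arg (q (Sum.inl j) - ω) ≠ 0 :=
      sub_ne_zero.2 (Ne.symm (hABne j))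
    have : s * (Complex.arg (q (Sum.inr j) - ω) - Complex.arg (q (Sum.inl j) - ω)) =
        t * (Complex.arg (q (Sum.inr j) - ω) - Complex.arg (q (Sum.inl j) - ω)) := by
      linarith
    exact mul_right_cancel₀ hD this
  · -- start point
    intro j
    have h := hγ0 j
    simp only [hτ]
    rw [h]
    exact hback (x j) _ rfl
  · -- end point
    intro j
    have h := hγ1 j
    simp only [hτ]
    rw [h]
    exact hback (y j) _ rfl
  · -- image inside the rectangle
    intro j
    rintro p ⟨t, ht, rfl⟩
    have hmem := (hΦmem (σ j t) (H j (σ j t)) (hHbnd j (σ j t))).1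
    rw [hmemsB] at hmem
    have hγRcl : γc j t ∈ Rcl := by
      have : Φ (σ j t) (H j (σ j t)) + ω = γc j t := by
        simp only [hγc]; ring
      rwa [this] at hmem
    rw [hRcl, himg] at hγRcl
    exact hγRcl
  · -- avoiding the obstacle
    intro j
    rw [Set.disjoint_left]
    rintro p ⟨t, ht, rfl⟩ hpΩ
    have h1 : m (τ j t) ∈ ΩC := ⟨τ j t, hpΩ, rfl⟩
    have h2 : m (τ j t) = γc j t := hmsurj _
    rw [h2] at h1
    have h3 : γc j t ∈ O := hOsub h1
    have h4 : Φ (σ j t) (H j (σ j t)) ∈ sA := by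
      rw [hmemsA]
      have : Φ (σ j t) (H j (σ j t)) + ω = γc j t := by
        simp only [hγc]; ring
      rwa [this]
    exact (hΦmem (σ j t) (H j (σ j t)) (hHbnd j (σ j t))).2 h4
  · -- pairwise disjoint
    intro i j hij
    rw [Set.disjoint_left]
    rintro p ⟨s, hs, rfl⟩ ⟨t, ht, hteq⟩
    obtain ⟨hσeq, hHeq⟩ := hsame j i t s ht hs hteq
    rw [hσeq] at hHeq
    exact hHdisj j i (Ne.symm hij) (σ i s) hHeq
end
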